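/- Let $N \ge 1$, $\mathcal{I} = \mathbb{Z}/N\mathbb{Z}$, and let $(\rho_j)_{j\in\mathcal{I}}$ be non-negative, and $(u_i), (v_i)$ positive reals indexed by $\mathcal{I}$. Then $\sum_{j\in\mathcal{I}} \rho_j \sum_{i\in\mathcal{I}} (u_{i+1} v_{i+1-j} - u_i v_{i-j})(\log u_{i+1} - \log u_i) + \sum_{j\in\mathcal{I}} \rho_{-j} \sum_{i\in\mathcal{I}} (v_{i+1} u_{i+1-j} - v_i u_{i-j})(\log v_{i+1} - \log v_i) = \sum_{j\in\mathcal{I}} \rho_j \sum_{i\in\mathcal{I}} (u_{i+1} v_{i+1-j} - u_i v_{i-j})(\log(u_{i+1} v_{i+1-j}) - \log(u_i v_{i-j}))$, and this common value is at least $4\sum_{j\in\mathcal{I}} \rho_j \sum_{i\in\mathcal{I}} (\sqrt{u_{i+1} v_{i+1-j}} - \sqrt{u_i v_{i-j}})^2$ (hence non-negative). -/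

import Mathlib

lemma aux1 (q : ℝ) (hq : 0 < q) {p : ℝ} (hp : q ≤ p) :
    2*(p-q) ≤ (p+q)*(Real.log p - Real.log q) := by
  set f : ℝ → ℝ := fun x => (x+q)*(Real.log x - Real.log q) - 2*(x-q) with hf
  have hder : ∀ x ∈ Set.Ioi q, HasDerivAt f (Real.log x - Real.log q + q/x - 1) x := by
    intro x hx
    have hx0 : 0 < x := lt_trans hq hx
    have h1 := (((hasDerivAt_id x).add_const q).mul
        ((Real.hasDerivAt_log hx0.ne').sub_const (Real.log q))).sub
        (((hasDerivAt_id x).sub_const q).const_mul 2)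
    simp only [id] at h1
    convert h1 using 1
    · rfl
    · rfl
    · rfl
    field_simp
    ring
  have hmono : MonotoneOn f (Set.Ici q) := by
    apply monotoneOn_of_deriv_nonneg (convex_Ici q)
    · apply ContinuousOn.sub
      · exact (continuousOn_id.add continuousOn_const).mul
          ((Real.continuousOn_log.mono (fun x hx => (lt_of_lt_of_le hq hx).ne')).sub continuousOn_const)
      · fun_prop
    · intro x hx
      rw [interior_Ici] at hx
      exact (hder x hx).differentiableAt.differentiableWithinAt
    · intro x hx
      rw [interior_Ici] at hx
      rw [(hder x hx).deriv]
      have hx0 : 0 < x := lt_trans hq hx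
      have h2 : Real.log (q/x) ≤ q/x - 1 := Real.log_le_sub_one_of_pos (by positivity)
      rw [Real.log_div hq.ne' hx0.ne'] at h2
      linarith
  have hfq : f q = 0 := by simp [hf]
  have := hmono (Set.self_mem_Ici) (Set.mem_Ici.mpr hp) hp
  rw [hfq] at this
  simp only [hf] at this
  linarith

lemma logmean_aux {a b : ℝ} (ha : 0 < a) (hb : 0 < b) (hab : b ≤ a) :
    4*(Real.sqrt a - Real.sqrt b)^2 ≤ (a - b)*(Real.log a - Real.log b) := by
  set p := Real.sqrt a
  set q := Real.sqrt b
  have hq : 0 < q := Real.sqrt_pos.mpr hb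
  have hp : 0 < p := Real.sqrt_pos.mpr ha
  have hpq : q ≤ p := Real.sqrt_le_sqrt hab
  have hpa : p^2 = a := Real.sq_sqrt ha.le
  have hqb : q^2 = b := Real.sq_sqrt hb.le
  have hla : Real.log a = 2 * Real.log p := by
    rw [← hpa, Real.log_pow]; push_cast; ring
  have hlb : Real.log b = 2 * Real.log q := by
    rw [← hqb, Real.log_pow]; push_cast; ring
  have key := aux1 q hq hpq
  have := mul_le_mul_of_nonneg_left key (by linarith : (0:ℝ) ≤ 2*(p-q))
  rw [hla, hlb, ← hpa, ← hqb]
  nlinarith [this]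

lemma logmean (a b : ℝ) (ha : 0 < a) (hb : 0 < b) :
    4*(Real.sqrt a - Real.sqrt b)^2 ≤ (a - b)*(Real.log a - Real.log b) := by
  rcases le_total b a with h | h
  · exact logmean_aux ha hb h
  · have := logmean_aux hb ha h
    nlinarith [this]

/-- Cross-diffusion term identity and lower bound in the discrete entropy dissipation
estimate on the discrete torus. -/
theorem cross_diffusion_symmetrization (N : ℕ) [NeZero N]
    (ρ : ZMod N → ℝ) (hρ : ∀ j, 0 ≤ ρ j)
    (u v : ZMod N → ℝ) (hu : ∀ i, 0 < u i) (hv : ∀ i, 0 < v i) :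
    (∑ j : ZMod N, ρ j * ∑ i : ZMod N,
          (u (i + 1) * v (i + 1 - j) - u i * v (i - j)) * (Real.log (u (i + 1)) - Real.log (u i))
        + ∑ j : ZMod N, ρ (-j) * ∑ i : ZMod N,
          (v (i + 1) * u (i + 1 - j) - v i * u (i - j)) * (Real.log (v (i + 1)) - Real.log (v i))
      = ∑ j : ZMod N, ρ j * ∑ i : ZMod N,
          (u (i + 1) * v (i + 1 - j) - u i * v (i - j)) *
            (Real.log (u (i + 1) * v (i + 1 - j)) - Real.log (u i * v (i - j)))) ∧
    4 * ∑ j : ZMod N, ρ j * ∑ i : ZMod N,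
        (Real.sqrt (u (i + 1) * v (i + 1 - j)) - Real.sqrt (u i * v (i - j))) ^ 2
      ≤ ∑ j : ZMod N, ρ j * ∑ i : ZMod N,
          (u (i + 1) * v (i + 1 - j) - u i * v (i - j)) *
            (Real.log (u (i + 1) * v (i + 1 - j)) - Real.log (u i * v (i - j))) := by
  constructor
  · have hinner : ∀ j : ZMod N,
        ∑ i : ZMod N, (v (i+1) * u (i+1+j) - v i * u (i+j)) *
            (Real.log (v (i+1)) - Real.log (v i))
        = ∑ i : ZMod N, (u (i+1) * v (i+1-j) - u i * v (i-j)) *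
            (Real.log (v (i+1-j)) - Real.log (v (i-j))) := by
      intro j
      rw [← Equiv.sum_comp (Equiv.subRight j) (fun i : ZMod N =>
        (v (i+1) * u (i+1+j) - v i * u (i+j)) * (Real.log (v (i+1)) - Real.log (v i)))]
      apply Finset.sum_congr rfl
      intro i _
      simp only [Equiv.subRight_apply]
      have e1 : i - j + 1 + j = i + 1 := by ring
      have e2 : i - j + j = i := by ring
      have e3 : i - j + 1 = i + 1 - j := by ring
      rw [e1, e2, e3]
      ring
    have h2 : ∑ j : ZMod N, ρ (-j) * ∑ i : ZMod N,
          (v (i + 1) * u (i + 1 - j) - v i * u (i - j)) * (Real.log (v (i + 1)) - Real.log (v i))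
        = ∑ j : ZMod N, ρ j * ∑ i : ZMod N,
          (u (i+1) * v (i+1-j) - u i * v (i-j)) *
            (Real.log (v (i+1-j)) - Real.log (v (i-j))) := by
      rw [← Equiv.sum_comp (Equiv.neg (ZMod N)) (fun j : ZMod N => ρ (-j) * ∑ i : ZMod N,
          (v (i + 1) * u (i + 1 - j) - v i * u (i - j)) *
            (Real.log (v (i + 1)) - Real.log (v i)))]
      apply Finset.sum_congr rfl
      intro j _
      simp only [Equiv.neg_apply, neg_neg, sub_neg_eq_add]
      rw [hinner j]
    rw [h2, ← Finset.sum_add_distrib]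
    apply Finset.sum_congr rfl
    intro j _
    rw [← mul_add, ← Finset.sum_add_distrib]
    congr 1
    apply Finset.sum_congr rfl
    intro i _
    rw [Real.log_mul (hu _).ne' (hv _).ne', Real.log_mul (hu _).ne' (hv _).ne']
    ring
  · rw [Finset.mul_sum]
    apply Finset.sum_le_sum
    intro j _
    rw [show (4:ℝ) * (ρ j * ∑ i : ZMod N,
        (Real.sqrt (u (i + 1) * v (i + 1 - j)) - Real.sqrt (u i * v (i - j))) ^ 2)
      = ρ j * (4 * ∑ i : ZMod N,
        (Real.sqrt (u (i + 1) * v (i + 1 - j)) - Real.sqrt (u i * v (i - j))) ^ 2) by ring]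
    apply mul_le_mul_of_nonneg_left _ (hρ j)
    rw [Finset.mul_sum]
    apply Finset.sum_le_sum
    intro i _
    exact logmean _ _ (mul_pos (hu _) (hv _)) (mul_pos (hu _) (hv _))
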